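/- arXiv:2405.01619 — 2 statements merged into one kernel-verified Lean document; each statement's English description precedes it below -/
import Mathlib

section
/- Let n ≥ 1, γ > 0, v₀ > 0, vⱼ > 0 for j ∈ {1,…,n}, and Zᵢ ∈ ℝ. Let u, c₁,…,cₙ : ℝ³ → ℝ be differentiable at a point r with cᵢ(r) > 0 and 1 − γ ∑_{j=1}^n vⱼ cⱼ(r) > 0, and define c̄ᵢ : ℝ³ → ℝ by c̄ᵢ(r′) = cᵢ(r′) · exp(Zᵢ u(r′)) · (1 − γ ∑_{j=1}^n vⱼ cⱼ(r′))^{−vᵢ/v₀}. Then ∇cᵢ(r) + Zᵢ cᵢ(r) ∇u(r) + (vᵢ/v₀) cᵢ(r) · γ ∑_{j=1}^n vⱼ ∇cⱼ(r) / (1 − γ ∑_{j=1}^n vⱼ cⱼ(r)) = exp(−Zᵢ u(r)) · (1 − γ ∑_{j=1}^n vⱼ cⱼ(r))^{vᵢ/v₀} · ∇c̄ᵢ(r) (equality of vectors in ℝ³). -/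
open Real Finset

/-- The key relationship identity (c_bar_c_relationship2) in the proof of Theorem 1:
`∇cᵢ + Zᵢ cᵢ ∇u + (vᵢ/v₀) cᵢ γ ∑ⱼ vⱼ ∇cⱼ / (1 − γ ∑ⱼ vⱼ cⱼ)
  = e^{−Zᵢ u} (1 − γ ∑ⱼ vⱼ cⱼ)^{vᵢ/v₀} ∇c̄ᵢ` at the point `r`, where
`c̄ᵢ = cᵢ e^{Zᵢ u} (1 − γ ∑ⱼ vⱼ cⱼ)^{−vᵢ/v₀}` is the size-modified Slotboom variable. -/
theorem slotboom_gradient_relationship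
    (n : ℕ) (hn : 1 ≤ n) (γ v₀ : ℝ) (hγ : 0 < γ) (hv₀ : 0 < v₀)
    (v : Fin n → ℝ) (hv : ∀ j, 0 < v j) (Z : Fin n → ℝ) (i : Fin n)
    (u : EuclideanSpace ℝ (Fin 3) → ℝ)
    (c : Fin n → EuclideanSpace ℝ (Fin 3) → ℝ)
    (r : EuclideanSpace ℝ (Fin 3))
    (hu : DifferentiableAt ℝ u r)
    (hc : ∀ j, DifferentiableAt ℝ (c j) r)
    (hci : 0 < c i r)
    (hw : 0 < 1 - γ * ∑ j, v j * c j r)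
    (cbar : EuclideanSpace ℝ (Fin 3) → ℝ)
    (hcbar : cbar = fun r' => c i r' * Real.exp (Z i * u r') *
        (1 - γ * ∑ j, v j * c j r') ^ (-(v i / v₀))) :
    gradient (c i) r + (Z i * c i r) • gradient u r
        + ((v i / v₀) * c i r * γ / (1 - γ * ∑ j, v j * c j r)) •
            ∑ j, v j • gradient (c j) r =
      (Real.exp (-(Z i * u r)) *
          (1 - γ * ∑ j, v j * c j r) ^ (v i / v₀)) • gradient cbar r := by
  set W : ℝ := 1 - γ * ∑ j, v j * c j r with hW
  set p : ℝ := v i / v₀ with hp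
  set E : ℝ := Real.exp (Z i * u r) with hE
  set Du := fderiv ℝ u r
  set D := fun j => fderiv ℝ (c j) r
  set S : EuclideanSpace ℝ (Fin 3) →L[ℝ] ℝ := ∑ j, v j • D j with hS
  -- derivative of the water-fraction function
  have hwf : HasFDerivAt (fun r' => 1 - γ * ∑ j, v j * c j r') ((-γ) • S) r := by
    have hsum : HasFDerivAt (fun r' => ∑ j, v j * c j r') S r := by
      rw [hS]
      exact HasFDerivAt.fun_sum fun j _ => (hc j).hasFDerivAt.const_mul (v j)
    have := (hsum.const_mul γ).const_sub 1
    exact this.congr_fderiv (neg_smul γ S).symm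
  -- derivative of the rpow factor
  have hpow : HasFDerivAt (fun r' => (1 - γ * ∑ j, v j * c j r') ^ (-p))
      ((-p * W ^ (-p - 1)) • ((-γ) • S)) r :=
    hwf.rpow_const (Or.inl hw.ne')
  -- derivative of the exp factor
  have hexp : HasFDerivAt (fun r' => Real.exp (Z i * u r'))
      (E • (Z i • Du)) r := by
    simpa using ((hu.hasFDerivAt.const_mul (Z i))).exp
  have hFD : HasFDerivAt cbar
      ((c i r * E) • ((-p * W ^ (-p - 1)) • ((-γ) • S))
        + (W ^ (-p)) • ((c i r) • (E • (Z i • Du)) + E • D i)) r := by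
    rw [hcbar]
    exact ((hc i).hasFDerivAt.mul hexp).mul hpow
  have hgrad := hFD.hasGradientAt.gradient
  rw [hgrad]
  unfold gradient
  simp only [map_add, map_smul, hS, map_sum, LinearIsometryEquiv.map_smul,
    LinearIsometryEquiv.map_add, D, Du]
  have hEinv : Real.exp (-(Z i * u r)) * E = 1 := by
    rw [hE, ← Real.exp_add]; simp
  have h1 : W ^ p * W ^ (-p) = 1 := by
    rw [← Real.rpow_add hw]; simp
  have h3 : W ^ p * W ^ (-p - 1) = W⁻¹ := by
    rw [← Real.rpow_add hw, show p + (-p - 1) = -1 by ring, Real.rpow_neg_one]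
  have hWne : W ≠ 0 := hw.ne'
  match_scalars
  · symm
    calc rexp (-(Z i * u r)) * W ^ p * (W ^ (-p) * (E * 1))
        = (rexp (-(Z i * u r)) * E) * (W ^ p * W ^ (-p)) := by ring
      _ = 1 := by rw [hEinv, h1]; ring
  · symm
    calc rexp (-(Z i * u r)) * W ^ p * (W ^ (-p) * (c i r * (E * (Z i * 1))))
        = (rexp (-(Z i * u r)) * E) * (W ^ p * W ^ (-p)) * (Z i * c i r) := by ring
      _ = Z i * c i r * 1 := by rw [hEinv, h1]; ring
  · symm
    calc rexp (-(Z i * u r)) * W ^ p * (c i r * E * (-p * W ^ (-p - 1) * (-γ * 1)))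
        = (rexp (-(Z i * u r)) * E) * (W ^ p * W ^ (-p - 1)) * (p * c i r * γ) := by ring
      _ = p * c i r * γ / W * 1 := by rw [hEinv, h3]; field_simp
end

section
/- Let n ≥ 1, γ > 0, v₀ > 0, vⱼ > 0 for j ∈ {1,…,n}, and Zᵢ ∈ ℝ. Let 𝒟ᵢ : ℝ³ → ℝ be any function and let u, c₁,…,cₙ : ℝ³ → ℝ be differentiable at a point r with cᵢ(r) > 0 and 1 − γ ∑_{j=1}^n vⱼ cⱼ(r) > 0. Define the size-modified flux Jᵢ(r) = −𝒟ᵢ(r) · [ ∇cᵢ(r) + Zᵢ cᵢ(r) ∇u(r) + (vᵢ/v₀) cᵢ(r) · γ ∑_{j=1}^n vⱼ ∇cⱼ(r) / (1 − γ ∑_{j=1}^n vⱼ cⱼ(r)) ], the Slotboom variable c̄ᵢ(r′) = cᵢ(r′) exp(Zᵢ u(r′)) (1 − γ ∑_{j=1}^n vⱼ cⱼ(r′))^{−vᵢ/v₀}, and the transformed diffusion coefficient 𝒟̂ᵢ(r) = 𝒟ᵢ(r) · exp(−Zᵢ u(r)) · (1 − γ ∑_{j=1}^n vⱼ cⱼ(r))^{vᵢ/v₀}.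 Then Jᵢ(r) = −𝒟̂ᵢ(r) ∇c̄ᵢ(r). -/
open Real Finset

/-- The size-modified Nernst–Planck flux
`Jᵢ = −𝒟ᵢ [∇cᵢ + Zᵢ cᵢ ∇u + (vᵢ/v₀) cᵢ γ ∑ⱼ vⱼ ∇cⱼ / (1 − γ ∑ⱼ vⱼ cⱼ)]`
takes the self-adjoint form `Jᵢ = −𝒟̂ᵢ ∇c̄ᵢ` with the transformed diffusion coefficient
`𝒟̂ᵢ = 𝒟ᵢ e^{−Zᵢ u} (1 − γ ∑ⱼ vⱼ cⱼ)^{vᵢ/v₀}` and the Slotboom variable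
`c̄ᵢ = cᵢ e^{Zᵢ u} (1 − γ ∑ⱼ vⱼ cⱼ)^{−vᵢ/v₀}`. -/
theorem flux_selfadjoint_form
    (n : ℕ) (hn : 1 ≤ n) (γ v₀ : ℝ) (hγ : 0 < γ) (hv₀ : 0 < v₀)
    (v : Fin n → ℝ) (hv : ∀ j, 0 < v j) (Z : Fin n → ℝ) (i : Fin n)
    (D : EuclideanSpace ℝ (Fin 3) → ℝ)
    (u : EuclideanSpace ℝ (Fin 3) → ℝ)
    (c : Fin n → EuclideanSpace ℝ (Fin 3) → ℝ)
    (r : EuclideanSpace ℝ (Fin 3))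
    (hu : DifferentiableAt ℝ u r)
    (hc : ∀ j, DifferentiableAt ℝ (c j) r)
    (hci : 0 < c i r)
    (hw : 0 < 1 - γ * ∑ j, v j * c j r)
    (J : EuclideanSpace ℝ (Fin 3))
    (hJ : J = -(D r) • (gradient (c i) r + (Z i * c i r) • gradient u r
        + ((v i / v₀) * c i r * γ / (1 - γ * ∑ j, v j * c j r)) •
            ∑ j, v j • gradient (c j) r))
    (cbar : EuclideanSpace ℝ (Fin 3) → ℝ)
    (hcbar : cbar = fun r' => c i r' * Real.exp (Z i * u r') *
        (1 - γ * ∑ j, v j * c j r') ^ (-(v i / v₀)))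
    (Dhat : ℝ)
    (hDhat : Dhat = D r * Real.exp (-(Z i * u r)) *
        (1 - γ * ∑ j, v j * c j r) ^ (v i / v₀)) :
    J = -Dhat • gradient cbar r := by
  classical
  set a : ℝ := v i / v₀ with ha
  set W : ℝ := 1 - γ * ∑ j, v j * c j r with hW
  have hW0 : W ≠ 0 := ne_of_gt hw
  set Fu : EuclideanSpace ℝ (Fin 3) →L[ℝ] ℝ := fderiv ℝ u r with hFu
  set Fc : Fin n → (EuclideanSpace ℝ (Fin 3) →L[ℝ] ℝ) :=
    fun j => fderiv ℝ (c j) r with hFc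
  have hwfun : HasFDerivAt (fun r' => 1 - γ * ∑ j, v j * c j r')
      ((-γ) • ∑ j, v j • Fc j) r := by
    have hsum : HasFDerivAt (fun r' => ∑ j, v j * c j r')
        (∑ j, v j • Fc j) r := by
      refine HasFDerivAt.fun_sum fun j _ => ?_
      exact ((hc j).hasFDerivAt).const_mul (v j)
    have h := (hsum.const_mul γ).const_sub 1
    refine h.congr_fderiv ?_
    exact (neg_smul γ _).symm
  have hpow : HasFDerivAt (fun r' => (1 - γ * ∑ j, v j * c j r') ^ (-a))
      (((-a) * W ^ (-a - 1)) • ((-γ) • ∑ j, v j • Fc j)) r :=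
    hwfun.rpow_const (Or.inl hW0)
  have hexp : HasFDerivAt (fun r' => Real.exp (Z i * u r'))
      ((Real.exp (Z i * u r)) • ((Z i) • Fu)) r :=
    (hu.hasFDerivAt.const_mul (Z i)).exp
  have h12 : HasFDerivAt (fun r' => c i r' * Real.exp (Z i * u r'))
      (c i r • ((Real.exp (Z i * u r)) • ((Z i) • Fu))
        + Real.exp (Z i * u r) • Fc i) r :=
    (hc i).hasFDerivAt.mul hexp
  have hF : HasFDerivAt cbar
      ((c i r * Real.exp (Z i * u r)) •
          (((-a) * W ^ (-a - 1)) • ((-γ) • ∑ j, v j • Fc j))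
        + (W ^ (-a)) •
          (c i r • ((Real.exp (Z i * u r)) • ((Z i) • Fu))
            + Real.exp (Z i * u r) • Fc i)) r := by
    rw [hcbar]
    exact h12.mul hpow
  set gu : EuclideanSpace ℝ (Fin 3) := gradient u r with hgu'
  set g : Fin n → EuclideanSpace ℝ (Fin 3) := fun j => gradient (c j) r with hg
  set S : EuclideanSpace ℝ (Fin 3) := ∑ j, v j • g j with hS
  set Eℝ : ℝ := Real.exp (Z i * u r) * W ^ (-a) with hE
  set X : EuclideanSpace ℝ (Fin 3) :=
    g i + (Z i * c i r) • gu + ((a * c i r * γ / W)) • S with hX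
  have hgrad : gradient cbar r = Eℝ • X := by
    unfold gradient
    rw [hF.fderiv]
    have hgu : (InnerProductSpace.toDual ℝ (EuclideanSpace ℝ (Fin 3))).symm Fu = gu := rfl
    have hgj : ∀ j, (InnerProductSpace.toDual ℝ (EuclideanSpace ℝ (Fin 3))).symm (Fc j) = g j :=
      fun _ => rfl
    simp only [map_add, map_smul, map_sum, hgu, hgj]
    rw [← hS, hX, hE]
    have hpw : W ^ (-a - 1) = W ^ (-a) * W⁻¹ := by
      rw [Real.rpow_sub hw, Real.rpow_one]; ring
    rw [hpw]
    match_scalars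
    · ring
    · ring
    · field_simp
  rw [hJ, hgrad, hDhat]
  rw [smul_smul]
  have hDE : -(D r * Real.exp (-(Z i * u r)) * W ^ a) * Eℝ = -(D r) := by
    rw [hE]
    have h1 : Real.exp (-(Z i * u r)) * Real.exp (Z i * u r) = 1 := by
      rw [← Real.exp_add]; simp
    have h2 : W ^ a * W ^ (-a) = 1 := by
      rw [← Real.rpow_add hw]; simp
    have h3 : -(D r * Real.exp (-(Z i * u r)) * W ^ a) *
        (Real.exp (Z i * u r) * W ^ (-a))
        = -(D r) * ((Real.exp (-(Z i * u r)) * Real.exp (Z i * u r)) *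
            (W ^ a * W ^ (-a))) := by ring
    rw [h3, h1, h2]; ring
  rw [hDE, hX]
end
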